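/- Let n ≥ 0 and q ≥ 1 be integers, let I_1 < ⋯ < I_q be a partition of {0,1,…,n} into nonempty consecutive intervals of integers, set 𝔸_t := {r ∈ ℍ_n : r_1 ∈ I_t}, fix any choice of r-functions (f_r)_{r∈ℍ_n}, and set F_t := Σ_{r∈𝔸_t} f_r. Then for arbitrary real numbers c_1, …, c_q: ∫_{[0,1]^3} ∏_{t=1}^{q} (1 + c_t F_t(x)) dx = 1. -/

import Mathlib

open MeasureTheory
open scoped ENNReal Classical

/-- The `L^∞`-normalized Haar function of the dyadic interval `[j/2^k, (j+1)/2^k)`: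
it is `-1` on the left half, `+1` on the right half, and `0` outside. -/
noncomputable def haar1 (k j : ℕ) (x : ℝ) : ℝ :=
  if (j : ℝ) / 2 ^ k ≤ x ∧ x < ((j : ℝ) + 1 / 2) / 2 ^ k then -1
  else if ((j : ℝ) + 1 / 2) / 2 ^ k ≤ x ∧ x < ((j : ℝ) + 1) / 2 ^ k then 1
  else 0

/-- A dyadic rectangle in `[0,1]^d` is encoded by its levels `R.1` and positions `R.2`;
its `i`-th side interval is `[R.2 i / 2 ^ R.1 i, (R.2 i + 1) / 2 ^ R.1 i)`.
`haarR R` is the associated (tensor product) Haar function. -/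
noncomputable def haarR {d : ℕ} (R : (Fin d → ℕ) × (Fin d → ℕ)) (x : Fin d → ℝ) : ℝ :=
  ∏ i, haar1 (R.1 i) (R.2 i) (x i)

/-- The dyadic rectangles in `[0,1]^d` of volume exactly `2 ^ (-n)`. -/
def rectsEq (d n : ℕ) : Finset ((Fin d → ℕ) × (Fin d → ℕ)) :=
  ((Fintype.piFinset fun _ => Finset.range (n + 1)) ×ˢ
      (Fintype.piFinset fun _ => Finset.range (2 ^ n))).filter
    fun R => (∑ i, R.1 i) = n ∧ ∀ i, R.2 i < 2 ^ R.1 i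

/-- The dyadic rectangles in `[0,1]^d` of volume at least `2 ^ (-n)`. -/
def rectsGe (d n : ℕ) : Finset ((Fin d → ℕ) × (Fin d → ℕ)) :=
  ((Fintype.piFinset fun _ => Finset.range (n + 1)) ×ˢ
      (Fintype.piFinset fun _ => Finset.range (2 ^ n))).filter
    fun R => (∑ i, R.1 i) ≤ n ∧ ∀ i, R.2 i < 2 ^ R.1 i

/-- The unit cube `[0,1]^d`. -/
def unitCube (d : ℕ) : Set (Fin d → ℝ) := Set.univ.pi fun _ => Set.Icc 0 1

/-- `ℍ_n`: triples `r = (r 0, r 1, r 2)` of natural numbers with `r 0 + r 1 + r 2 = n`. -/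
def Hn (n : ℕ) : Finset (Fin 3 → ℕ) :=
  (Fintype.piFinset fun _ => Finset.range (n + 1)).filter fun r => ∑ i, r i = n

/-- The `r`-function with parameter `r ∈ ℍ_n` built from the signs `ε`:
`f_r = ∑_{R ∈ 𝓡_r} ε_R h_R`, the sum over all dyadic rectangles with levels `r`. -/
noncomputable def rfun (ε : ((Fin 3 → ℕ) × (Fin 3 → ℕ)) → ℝ) (r : Fin 3 → ℕ)
    (x : Fin 3 → ℝ) : ℝ :=
  ∑ j ∈ Fintype.piFinset (fun i => Finset.range (2 ^ r i)), ε (r, j) * haarR (r, j) x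

/-- `ℂ(2)`: pairs of distinct vectors in `ℍ_n` agreeing in the second coordinate. -/
def C2 (n : ℕ) : Finset ((Fin 3 → ℕ) × (Fin 3 → ℕ)) :=
  ((Hn n) ×ˢ (Hn n)).filter fun rs => rs.1 ≠ rs.2 ∧ rs.1 1 = rs.2 1

/-- Given partition boundaries `m`, the set `𝔸_t ⊆ ℍ_n` of vectors whose first
coordinate lies in the `t`-th interval `I_t = [m (t-1), m t)` of the partition. -/
def Apart (n : ℕ) (m : ℕ → ℕ) (t : ℕ) : Finset (Fin 3 → ℕ) :=
  (Hn n).filter fun r => m (t - 1) ≤ r 0 ∧ r 0 < m t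

lemma measurable_haar1 (k j : ℕ) : Measurable (haar1 k j) := by
  unfold haar1
  refine Measurable.ite ?_ measurable_const (Measurable.ite ?_ measurable_const measurable_const)
  · exact measurableSet_Ico
  · exact measurableSet_Ico

lemma abs_haar1_le (k j : ℕ) (x : ℝ) : |haar1 k j x| ≤ 1 := by
  unfold haar1; split_ifs <;> norm_num

lemma haar1_support {k j : ℕ} {x : ℝ} (h : haar1 k j x ≠ 0) :
    (j : ℝ) / 2 ^ k ≤ x ∧ x < ((j : ℝ) + 1) / 2 ^ k := by
  have h2 : (0:ℝ) < 2 ^ k := by positivity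
  unfold haar1 at h
  split_ifs at h with h1 h2'
  · refine ⟨h1.1, h1.2.trans_le ?_⟩
    gcongr
    norm_num
  · refine ⟨le_trans ?_ h2'.1, h2'.2⟩
    gcongr
    norm_num
  · exact absurd rfl h

lemma haar1_cond_iff1 (k j : ℕ) (x : ℝ) :
    ((j:ℝ)/2^k ≤ x ∧ x < ((j:ℝ)+1/2)/2^k) ↔ ⌊x * 2^(k+1)⌋ = 2*(j:ℤ) := by
  have h2 : (0:ℝ) < 2^k := by positivity
  rw [Int.floor_eq_iff, div_le_iff₀ h2, lt_div_iff₀ h2, pow_succ]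
  push_cast
  constructor
  · rintro ⟨h1, h2'⟩; constructor <;> nlinarith
  · rintro ⟨h1, h2'⟩; constructor <;> nlinarith

lemma haar1_cond_iff2 (k j : ℕ) (x : ℝ) :
    (((j:ℝ)+1/2)/2^k ≤ x ∧ x < ((j:ℝ)+1)/2^k) ↔ ⌊x * 2^(k+1)⌋ = 2*(j:ℤ)+1 := by
  have h2 : (0:ℝ) < 2^k := by positivity
  rw [Int.floor_eq_iff, div_le_iff₀ h2, lt_div_iff₀ h2, pow_succ]
  push_cast
  constructor
  · rintro ⟨h1, h2'⟩; constructor <;> nlinarith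
  · rintro ⟨h1, h2'⟩; constructor <;> nlinarith

lemma haar1_eq_floor (k j : ℕ) (x : ℝ) :
    haar1 k j x = if ⌊x * 2^(k+1)⌋ = 2*(j:ℤ) then -1
      else if ⌊x * 2^(k+1)⌋ = 2*(j:ℤ)+1 then 1 else 0 := by
  unfold haar1
  simp only [haar1_cond_iff1, haar1_cond_iff2]

lemma floor_scale_const {k K J : ℕ} (hk : k < K) {x : ℝ}
    (hx : (J:ℝ)/2^K ≤ x) (hx' : x < ((J:ℝ)+1)/2^K) :
    ⌊x * 2^(k+1)⌋ = ((J / 2^(K-k-1) : ℕ) : ℤ) := by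
  set d := K - k - 1 with hd
  have hK : K = (k+1) + d := by omega
  have h2d : (0:ℝ) < 2^d := by positivity
  have h2k : (0:ℝ) < 2^(k+1) := by positivity
  have hq1 : ((J / 2^d : ℕ) : ℝ) * 2^d ≤ (J:ℝ) := by
    exact_mod_cast Nat.cast_le.mpr (Nat.div_mul_le_self J (2^d))
  have hq2' : J < (J / 2^d + 1) * 2^d := by
    have h1 := Nat.div_add_mod J (2^d)
    have h2 : J % 2^d < 2^d := Nat.mod_lt _ (by positivity)
    nlinarith [h1, h2]
  have hq2 : (J:ℝ) + 1 ≤ ((J / 2^d : ℕ) : ℝ) * 2^d + 2^d := by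
    have : (J:ℝ) + 1 ≤ (((J / 2^d + 1) * 2^d : ℕ) : ℝ) := by exact_mod_cast hq2'
    push_cast at this; nlinarith [this]
  have hpow : (2:ℝ)^K = 2^(k+1) * 2^d := by rw [hK, pow_add]
  set Q : ℕ := J / 2^d with hQ
  clear_value Q
  rw [Int.floor_eq_iff]
  push_cast
  constructor
  · rw [hpow] at hx
    rw [div_le_iff₀ (by positivity)] at hx
    nlinarith [hx]
  · rw [hpow] at hx'
    rw [lt_div_iff₀ (by positivity)] at hx'
    nlinarith [hx']

lemma haar1_const {k K j J : ℕ} (hk : k < K) {x y : ℝ}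
    (hx : (J:ℝ)/2^K ≤ x) (hx' : x < ((J:ℝ)+1)/2^K)
    (hy : (J:ℝ)/2^K ≤ y) (hy' : y < ((J:ℝ)+1)/2^K) :
    haar1 k j x = haar1 k j y := by
  rw [haar1_eq_floor, haar1_eq_floor, floor_scale_const hk hx hx',
    floor_scale_const hk hy hy']

lemma integral_haar1 (k j : ℕ) : ∫ x : ℝ, haar1 k j x = 0 := by
  have h2 : (0:ℝ) < 2^k := by positivity
  set a := (j:ℝ)/2^k with ha
  set mid := ((j:ℝ)+1/2)/2^k with hmid
  set b := ((j:ℝ)+1)/2^k with hb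
  have ham : a ≤ mid := by rw [ha, hmid]; gcongr; norm_num
  have hmb : mid ≤ b := by rw [hmid, hb]; gcongr; norm_num
  have heq : haar1 k j = fun x =>
      (Set.Ico a mid).indicator (fun _ => (-1:ℝ)) x
        + (Set.Ico mid b).indicator (fun _ => (1:ℝ)) x := by
    funext x
    simp only [Set.indicator_apply, Set.mem_Ico]
    unfold haar1
    rw [← ha, ← hmid, ← hb]
    split_ifs with h1 h2 <;>
      first | exact absurd h2.1 (not_le.mpr h1.2) | norm_num
  rw [heq]
  rw [integral_add]
  · rw [integral_indicator_const _ measurableSet_Ico,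
      integral_indicator_const _ measurableSet_Ico,
      Real.volume_real_Ico_of_le ham, Real.volume_real_Ico_of_le hmb]
    simp only [smul_eq_mul]
    rw [ha, hmid, hb]
    field_simp
    ring
  · exact (integrable_indicator_iff measurableSet_Ico).mpr
      ((integrableOn_const_iff).mpr (Or.inr (by rw [Real.volume_Ico]; exact ENNReal.ofReal_lt_top)))
  · exact (integrable_indicator_iff measurableSet_Ico).mpr
      ((integrableOn_const_iff).mpr (Or.inr (by rw [Real.volume_Ico]; exact ENNReal.ofReal_lt_top)))

lemma haar1_ne_zero_mem {k j : ℕ} {x : ℝ} (h : haar1 k j x ≠ 0) :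
    (j:ℝ)/2^k ≤ x ∧ x < ((j:ℝ)+1)/2^k := haar1_support h

lemma integral_prod_haar1_zero {ι : Type*} (s : Finset ι) (hs : s.Nonempty)
    (k j : ι → ℕ)
    (hinj : ∀ t1 ∈ s, ∀ t2 ∈ s, t1 ≠ t2 → k t1 ≠ k t2) :
    ∫ x : ℝ, ∏ t ∈ s, haar1 (k t) (j t) x = 0 := by
  classical
  obtain ⟨t0, ht0, hmax⟩ := s.exists_max_image k hs
  set K := k t0 with hK
  set J := j t0 with hJ
  have haJ : (J:ℝ)/2^K ≤ (J:ℝ)/2^K := le_refl _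
  have hbJ : (J:ℝ)/2^K < ((J:ℝ)+1)/2^K := by
    have : (0:ℝ) < 2^K := by positivity
    gcongr
    norm_num
  set G : ℝ := ∏ t ∈ s.erase t0, haar1 (k t) (j t) ((J:ℝ)/2^K) with hG
  have heq : (fun x => ∏ t ∈ s, haar1 (k t) (j t) x)
      = fun x => G * haar1 K J x := by
    funext x
    by_cases h0 : haar1 K J x = 0
    · rw [h0, mul_zero]
      exact Finset.prod_eq_zero ht0 h0
    · obtain ⟨hx1, hx2⟩ := haar1_ne_zero_mem h0
      rw [← Finset.mul_prod_erase s _ ht0, mul_comm, hG]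
      congr 1
      apply Finset.prod_congr rfl
      intro t ht
      have htne : t ≠ t0 := (Finset.mem_erase.mp ht).1
      have hts : t ∈ s := (Finset.mem_erase.mp ht).2
      have hklt : k t < K := lt_of_le_of_ne (hmax t hts) (hinj t hts t0 ht0 htne)
      exact haar1_const hklt hx1 hx2 haJ hbJ
  rw [heq, MeasureTheory.integral_const_mul, integral_haar1, mul_zero]

lemma haar1_zero_of_notmem {k j : ℕ} (hj : j < 2 ^ k) {x : ℝ}
    (hx : ¬ (0 ≤ x ∧ x ≤ 1)) : haar1 k j x = 0 := by
  by_contra h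
  obtain ⟨h1, h2⟩ := haar1_support h
  have h2k : (0:ℝ) < 2^k := by positivity
  apply hx
  constructor
  · exact le_trans (by positivity) h1
  · have hj1 : ((j:ℝ)+1) ≤ 2^k := by exact_mod_cast Nat.succ_le_of_lt hj
    have : x < ((j:ℝ)+1)/2^k := h2
    have : ((j:ℝ)+1)/2^k ≤ 1 := by rw [div_le_one h2k]; exact hj1
    linarith

lemma integral_prod_haarR_zero {ι : Type*} (s : Finset ι) (hs : s.Nonempty)
    (R : ι → (Fin 3 → ℕ) × (Fin 3 → ℕ))
    (hpos : ∀ t ∈ s, ∀ i, (R t).2 i < 2 ^ (R t).1 i)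
    (hinj : ∀ t1 ∈ s, ∀ t2 ∈ s, t1 ≠ t2 → (R t1).1 0 ≠ (R t2).1 0) :
    ∫ x in unitCube 3, ∏ t ∈ s, haarR (R t) x = 0 := by
  classical
  obtain ⟨t0, ht0⟩ := hs
  rw [setIntegral_eq_integral_of_forall_compl_eq_zero]
  · have heq : (fun x : Fin 3 → ℝ => ∏ t ∈ s, haarR (R t) x)
        = fun x => ∏ i : Fin 3, ∏ t ∈ s, haar1 ((R t).1 i) ((R t).2 i) (x i) := by
      funext x
      unfold haarR
      rw [Finset.prod_comm]
    rw [heq, MeasureTheory.volume_pi,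
      MeasureTheory.integral_fintype_prod_eq_prod
        (f := fun i y => ∏ t ∈ s, haar1 ((R t).1 i) ((R t).2 i) y)]
    apply Finset.prod_eq_zero (Finset.mem_univ (0 : Fin 3))
    exact integral_prod_haar1_zero s ⟨t0, ht0⟩ _ _ hinj
  · intro x hx
    apply Finset.prod_eq_zero ht0
    unfold haarR
    simp only [unitCube, Set.mem_pi, Set.mem_univ, forall_true_left, not_forall] at hx
    obtain ⟨i, hi⟩ := hx
    apply Finset.prod_eq_zero (Finset.mem_univ i)
    apply haar1_zero_of_notmem (hpos t0 ht0 i)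
    simpa [Set.mem_Icc] using hi

lemma measurable_haarR {d : ℕ} (R : (Fin d → ℕ) × (Fin d → ℕ)) : Measurable (haarR R) := by
  unfold haarR
  exact Finset.measurable_prod _ fun i _ => (measurable_haar1 _ _).comp (measurable_pi_apply i)

lemma abs_haarR_le {d : ℕ} (R : (Fin d → ℕ) × (Fin d → ℕ)) (x : Fin d → ℝ) :
    |haarR R x| ≤ 1 := by
  unfold haarR
  rw [Finset.abs_prod]
  exact Finset.prod_le_one (fun i _ => abs_nonneg _) (fun i _ => abs_haar1_le _ _ _)

lemma integrableOn_cube {f : (Fin 3 → ℝ) → ℝ} (hf : Measurable f) {C : ℝ}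
    (hC : ∀ x, |f x| ≤ C) : IntegrableOn f (unitCube 3) := by
  have hvol : volume (unitCube 3) < ⊤ :=
    (isCompact_univ_pi fun _ => isCompact_Icc).measure_lt_top
  refine Integrable.mono' (g := fun _ => C)
    ((integrableOn_const_iff).mpr (Or.inr hvol)) hf.aestronglyMeasurable
    (Filter.Eventually.of_forall fun x => ?_)
  simpa [Real.norm_eq_abs] using hC x

lemma apart_first_ne {q n : ℕ} {m : ℕ → ℕ} (hmono : ∀ t < q, m t < m (t + 1))
    {t1 t2 : ℕ} (h1 : t1 ∈ Finset.Icc 1 q) (h2 : t2 ∈ Finset.Icc 1 q) (hne : t1 ≠ t2)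
    {r1 r2 : Fin 3 → ℕ} (hr1 : r1 ∈ Apart n m t1) (hr2 : r2 ∈ Apart n m t2) :
    r1 0 ≠ r2 0 := by
  have hmono' : ∀ a b, a ≤ b → b ≤ q → m a ≤ m b := by
    intro a b hab hb
    induction b with
    | zero =>
      have : a = 0 := by omega
      subst this; exact le_refl _
    | succ b ih =>
      rcases Nat.lt_or_ge a (b + 1) with h | h
      · exact le_trans (ih (by omega) (by omega)) (le_of_lt (hmono b (by omega)))
      · have : a = b + 1 := by omega
        subst this; exact le_refl _
  simp only [Apart, Finset.mem_filter] at hr1 hr2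
  simp only [Finset.mem_Icc] at h1 h2
  rcases Nat.lt_or_ge t1 t2 with h | h
  · have : m t1 ≤ m (t2 - 1) := hmono' t1 (t2 - 1) (by omega) (by omega)
    omega
  · have hlt : t2 < t1 := by omega
    have : m t2 ≤ m (t1 - 1) := hmono' t2 (t1 - 1) (by omega) (by omega)
    omega


/-- **Mean one of the Riesz product (proof of (6.9)):** for any coefficients `c_t`,
the Riesz-product-type integral `∫ ∏_{t=1}^q (1 + c_t F_t) = 1`, where
`F_t = ∑_{r ∈ 𝔸_t} f_r`. The partition `I_1 < ⋯ < I_q` of `{0, …, n}` is encoded by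
its boundaries `m 0 = 0 < m 1 < ⋯ < m q = n + 1`, with `I_t = [m (t-1), m t)`. -/
theorem riesz_product_mean_one (n q : ℕ) (hq : 1 ≤ q) (m : ℕ → ℕ)
    (hm0 : m 0 = 0) (hmq : m q = n + 1) (hmono : ∀ t < q, m t < m (t + 1))
    (ε : ((Fin 3 → ℕ) × (Fin 3 → ℕ)) → ℝ) (hε : ∀ R, ε R = 1 ∨ ε R = -1)
    (c : ℕ → ℝ) :
    (∫ x in unitCube 3, ∏ t ∈ Finset.Icc 1 q,
      (1 + c t * ∑ r ∈ Apart n m t, rfun ε r x)) = 1 := by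
  classical
  set s : Finset ℕ := Finset.Icc 1 q with hs
  set D : ℕ → Finset (Σ _ : Fin 3 → ℕ, Fin 3 → ℕ) :=
    fun t => (Apart n m t).sigma
      (fun r => Fintype.piFinset fun i => Finset.range (2 ^ r i)) with hD
  have hF : ∀ t (x : Fin 3 → ℝ), (∑ r ∈ Apart n m t, rfun ε r x)
      = ∑ p ∈ D t, ε (p.1, p.2) * haarR (p.1, p.2) x := by
    intro t x
    simp only [hD]
    rw [Finset.sum_sigma]
    simp only [rfun]
  -- pointwise expansion of the Riesz product
  have key : ∀ x : Fin 3 → ℝ,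
      (∏ t ∈ s, (1 + c t * ∑ r ∈ Apart n m t, rfun ε r x))
        = ∑ T ∈ s.powerset, ∑ g ∈ (s \ T).pi (fun t => D t),
            (∏ t ∈ s \ T, c t) *
              ∏ t ∈ (s \ T).attach,
                (ε ((g t.1 t.2).1, (g t.1 t.2).2) * haarR ((g t.1 t.2).1, (g t.1 t.2).2) x) := by
    intro x
    rw [Finset.prod_add (fun _ => (1:ℝ)) (fun t => c t * ∑ r ∈ Apart n m t, rfun ε r x) s]
    apply Finset.sum_congr rfl
    intro T hT
    rw [Finset.prod_const_one, one_mul, Finset.prod_mul_distrib]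
    simp only [hF]
    rw [Finset.prod_sum, Finset.mul_sum]
  -- integrability of each term
  have hint : ∀ (u : Finset ℕ) (g : ∀ a ∈ u, (Σ _ : Fin 3 → ℕ, Fin 3 → ℕ)),
      IntegrableOn (fun x => (∏ t ∈ u, c t) *
        ∏ t ∈ u.attach,
          (ε ((g t.1 t.2).1, (g t.1 t.2).2) * haarR ((g t.1 t.2).1, (g t.1 t.2).2) x))
        (unitCube 3) := by
    intro u g
    apply integrableOn_cube
      (C := |∏ t ∈ u, c t| * ∏ t ∈ u.attach, |ε ((g t.1 t.2).1, (g t.1 t.2).2)|)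
    · exact (Finset.measurable_prod _ fun t _ =>
        (measurable_haarR _).const_mul _).const_mul _
    · intro x
      rw [abs_mul, Finset.abs_prod u.attach]
      refine mul_le_mul_of_nonneg_left ?_ (abs_nonneg _)
      refine Finset.prod_le_prod (fun t _ => abs_nonneg _) (fun t _ => ?_)
      rw [abs_mul]
      have h1 := abs_haarR_le ((g t.1 t.2).1, (g t.1 t.2).2) x
      have h2 := abs_nonneg (ε ((g t.1 t.2).1, (g t.1 t.2).2))
      nlinarith
  rw [integral_congr_ae (Filter.Eventually.of_forall key)]
  rw [integral_finset_sum _ (fun T _ => integrable_finset_sum _ (fun g _ => hint (s \ T) g))]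
  have step : ∀ T ∈ s.powerset,
      (∫ x in unitCube 3, ∑ g ∈ (s \ T).pi (fun t => D t),
        (∏ t ∈ s \ T, c t) *
          ∏ t ∈ (s \ T).attach,
            (ε ((g t.1 t.2).1, (g t.1 t.2).2) * haarR ((g t.1 t.2).1, (g t.1 t.2).2) x))
      = ∑ g ∈ (s \ T).pi (fun t => D t), ∫ x in unitCube 3,
        (∏ t ∈ s \ T, c t) *
          ∏ t ∈ (s \ T).attach,
            (ε ((g t.1 t.2).1, (g t.1 t.2).2) * haarR ((g t.1 t.2).1, (g t.1 t.2).2) x) :=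
    fun T _ => integral_finset_sum _ (fun g _ => hint (s \ T) g)
  rw [Finset.sum_congr rfl step]
  have hvol : volume (unitCube 3) = 1 := by
    simp only [unitCube]
    rw [volume_pi_pi]
    simp [Real.volume_Icc]
  rw [Finset.sum_eq_single_of_mem s (Finset.mem_powerset_self s)]
  · rw [Finset.sdiff_self]
    rw [Finset.pi_empty, Finset.sum_singleton]
    simp only [Finset.prod_empty, Finset.attach_empty, one_mul]
    rw [MeasureTheory.setIntegral_const, measureReal_def, hvol]
    simp
  · intro T hT hTne
    have hu : (s \ T).Nonempty := Finset.sdiff_nonempty.mpr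
      (fun hsub => hTne (Finset.Subset.antisymm (Finset.mem_powerset.mp hT) hsub))
    apply Finset.sum_eq_zero
    intro g hg
    have hpos : ∀ t ∈ (s \ T).attach, ∀ i : Fin 3,
        ((g t.1 t.2).1, (g t.1 t.2).2).2 i < 2 ^ ((g t.1 t.2).1, (g t.1 t.2).2).1 i := by
      intro t ht i
      obtain ⟨h1', h2'⟩ := Finset.mem_sigma.mp (Finset.mem_pi.mp hg t.1 t.2)
      have := (Fintype.mem_piFinset.mp h2') i
      simpa using Finset.mem_range.mp this
    have hinj : ∀ t1 ∈ (s \ T).attach, ∀ t2 ∈ (s \ T).attach, t1 ≠ t2 →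
        ((g t1.1 t1.2).1, (g t1.1 t1.2).2).1 0 ≠ ((g t2.1 t2.2).1, (g t2.1 t2.2).2).1 0 := by
      intro t1 ht1 t2 ht2 hne
      obtain ⟨h1a, _⟩ := Finset.mem_sigma.mp (Finset.mem_pi.mp hg t1.1 t1.2)
      obtain ⟨h2a, _⟩ := Finset.mem_sigma.mp (Finset.mem_pi.mp hg t2.1 t2.2)
      have ht1s : t1.1 ∈ Finset.Icc 1 q := by
        have := (Finset.mem_sdiff.mp t1.2).1
        exact this
      have ht2s : t2.1 ∈ Finset.Icc 1 q := by
        have := (Finset.mem_sdiff.mp t2.2).1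
        exact this
      have hne' : t1.1 ≠ t2.1 := fun h => hne (Subtype.ext h)
      exact apart_first_ne hmono ht1s ht2s hne' h1a h2a
    have hatt : (s \ T).attach.Nonempty := Finset.attach_nonempty_iff.mpr hu
    have hzero' : ∫ x in unitCube 3, ∏ t ∈ (s \ T).attach,
        haarR ((g t.1 t.2).1, (g t.1 t.2).2) x = 0 :=
      integral_prod_haarR_zero _ hatt
        (fun t => ((g t.1 t.2).1, (g t.1 t.2).2)) hpos hinj
    have hre : ∀ x : Fin 3 → ℝ, ((∏ t ∈ s \ T, c t) *
        ∏ t ∈ (s \ T).attach,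
          (ε ((g t.1 t.2).1, (g t.1 t.2).2) * haarR ((g t.1 t.2).1, (g t.1 t.2).2) x))
        = ((∏ t ∈ s \ T, c t) *
            ∏ t ∈ (s \ T).attach, ε ((g t.1 t.2).1, (g t.1 t.2).2)) *
          ∏ t ∈ (s \ T).attach, haarR ((g t.1 t.2).1, (g t.1 t.2).2) x := by
      intro x
      rw [Finset.prod_mul_distrib]
      ring
    rw [integral_congr_ae (Filter.Eventually.of_forall hre),
      MeasureTheory.integral_const_mul, hzero', mul_zero]
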